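/- Let g, κ, τ, s, m be real numbers with m ≥ 0 and 1 + τ > 0, and set κ' := κ(1+m)/(2(1+τ)). Assume |κ'|·(2|g| + |κ'|) < (1−s)(1+m). Define z := (1 + τ + ig)² − (1 − s − iκ)(1+m) ∈ ℂ and let r := z^{1/2} be the principal square root. Then Re r < 1 + τ. -/

import Mathlib

open Complex

/-- Key computation for the `h`-perturbed symbol: with `τ` playing the role of `hF`,
`κ` of `h·ξ'(K)`, `g` of `g₀(df,ξ')`, `m` of `|df|²`, `s` of `|ξ'|²`, if
`|κ'|(2|g| + |κ'|) < (1−s)(1+m)` where `κ' = κ(1+m)/(2(1+τ))`, then the principal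
square root `r` of `z = (1 + τ + ig)² − (1 − s − iκ)(1+m)` satisfies `Re r < 1 + τ`. -/
theorem perturbed_root_re_lt (g κ τ s m : ℝ) (hm : 0 ≤ m) (hτ : 0 < 1 + τ)
    (κ' : ℝ) (hκ' : κ' = κ * (1 + m) / (2 * (1 + τ)))
    (hyp : |κ'| * (2 * |g| + |κ'|) < (1 - s) * (1 + m))
    (z : ℂ) (hz : z = (1 + (τ : ℂ) + Complex.I * (g : ℂ)) ^ 2
      - (1 - (s : ℂ) - Complex.I * (κ : ℂ)) * (1 + (m : ℂ)))
    (r : ℂ) (hr : r = z ^ ((1 : ℂ) / 2)) :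
    r.re < 1 + τ := by
  have hκm : κ * (1 + m) = 2 * (1 + τ) * κ' := by
    rw [hκ']; field_simp
  have hre : z.re = (1 + τ) ^ 2 - g ^ 2 - (1 - s) * (1 + m) := by
    rw [hz]; simp [Complex.ext_iff, pow_two, mul_re, mul_im]; try ring
  have him : z.im = 2 * (1 + τ) * g + κ * (1 + m) := by
    rw [hz]; simp [Complex.ext_iff, pow_two, mul_re, mul_im]; try ring
  have hg : g * κ' ≤ |g| * |κ'| := by
    calc g * κ' ≤ |g * κ'| := le_abs_self _
    _ = |g| * |κ'| := abs_mul _ _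
  have hk2 : κ' ^ 2 = |κ'| ^ 2 := (_root_.sq_abs κ').symm
  have hpos : (0:ℝ) < (1-s)*(1+m) :=
    lt_of_le_of_lt (by positivity) hyp
  have hA : (0:ℝ) < 2 * (1 + τ) ^ 2 - z.re := by
    rw [hre]; nlinarith
  have habs : ‖z‖ < 2 * (1 + τ) ^ 2 - z.re := by
    rw [Complex.norm_def]
    rw [Real.sqrt_lt' hA]
    rw [Complex.normSq_apply]
    rw [hre, him, hκm]
    nlinarith [sq_nonneg (1+τ), sq_nonneg g, mul_pos (mul_pos hτ hτ) hpos,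
      sq_nonneg (g + κ')]
  have hr2 : r.re = Real.sqrt ((‖z‖ + z.re) / 2) := by
    rw [hr, show (1:ℂ)/2 = (2⁻¹ : ℂ) by norm_num, Complex.cpow_inv_two_re]
  rw [hr2, Real.sqrt_lt' hτ]
  nlinarith
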